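/- Let X be a separable Banach space and let A be a weak*-compact subset of X* such that [σ^{ω^n}]^m_ε(A) = ∅ for some integers n ≥ 0, m ≥ 1 and some ε > 0 (where σ^{ω^0} := σ). Then there exists a symmetric (B = −B) and radial (λx* ∈ B for every x* ∈ B and λ ∈ [0,1]) weak*-compact set B ⊆ X* containing A such that [σ^{ω^n}]'_{4ε}(B) ⊆ (1 − 1/(32(m+1))) B. -/

import Mathlib

open Filter Topology Set Pointwise

noncomputable section

namespace Szlenk

variable {E : Type*}

/-- The fragment derivation `[η]'_ε(A)` associated to a set function `η`:
the points of `A` all of whose neighborhoods `U` satisfy `η (A ∩ cl U) ≥ ε`. -/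
def frag [TopologicalSpace E] (η : Set E → ℝ) (ε : ℝ) (A : Set E) : Set E :=
  {x | x ∈ A ∧ ∀ U ∈ 𝓝 x, ε ≤ η (A ∩ closure U)}

/-- Transfinite iterates `[η]^γ_ε(A)` of the fragment derivation. -/
def fragIter [TopologicalSpace E] (η : Set E → ℝ) (ε : ℝ) (A : Set E) (γ : Ordinal.{0}) :
    Set E :=
  Ordinal.limitRecOn γ A (fun _ S => frag η ε S)
    (fun γ _ ih => ⋂ β : {β : Ordinal.{0} // β < γ}, ih β.1 β.2)

/-- The `ω`-iterated measure `η^ω (A) = inf {ε > 0 : [η]^ω_ε(A) = ∅}`. -/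
def etaOmega [TopologicalSpace E] (η : Set E → ℝ) (A : Set E) : ℝ :=
  sInf {ε : ℝ | 0 < ε ∧ fragIter η ε A Ordinal.omega0 = ∅}

/-- The iterates `η^{ω^n}` (with `η^{ω^0} := η` and `η^{ω^{n+1}} := (η^{ω^n})^ω`). -/
def omegaPow [TopologicalSpace E] (η : Set E → ℝ) : ℕ → Set E → ℝ
  | 0 => η
  | n + 1 => etaOmega (omegaPow η n)

/-- `η` is a measure of non compactness (with respect to the closed unit ball `ball`):
it is nonnegative, vanishes on singletons, is monotone, satisfies
`η (A ∪ B) = max (η A) (η B)`, and `η (A + l • ball) ≤ η A + l * b` for some `b > 0`.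
All conditions are required on (weak*-)compact sets only. -/
structure IsMNCOn [TopologicalSpace E] [AddCommGroup E] [Module ℝ E]
    (ball : Set E) (η : Set E → ℝ) : Prop where
  nonneg : ∀ A : Set E, IsCompact A → 0 ≤ η A
  singleton : ∀ x : E, η {x} = 0
  mono : ∀ A B : Set E, IsCompact A → IsCompact B → A ⊆ B → η A ≤ η B
  union : ∀ A B : Set E, IsCompact A → IsCompact B → η (A ∪ B) = max (η A) (η B)
  ball_add : ∃ b > 0, ∀ A : Set E, IsCompact A → ∀ l : ℝ, 0 < l →
    η (A + l • ball) ≤ η A + l * b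

/-- `η` is a measure of non compactness with the explicit constant `b` in property (iii). -/
structure IsMNCWith [TopologicalSpace E] [AddCommGroup E] [Module ℝ E]
    (ball : Set E) (b : ℝ) (η : Set E → ℝ) : Prop where
  b_pos : 0 < b
  nonneg : ∀ A : Set E, IsCompact A → 0 ≤ η A
  singleton : ∀ x : E, η {x} = 0
  mono : ∀ A B : Set E, IsCompact A → IsCompact B → A ⊆ B → η A ≤ η B
  union : ∀ A B : Set E, IsCompact A → IsCompact B → η (A ∪ B) = max (η A) (η B)
  ball_add : ∀ A : Set E, IsCompact A → ∀ l : ℝ, 0 < l →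
    η (A + l • ball) ≤ η A + l * b

/-- A sublinear measure of non compactness: homogeneous and subadditive. -/
structure IsSublinear [TopologicalSpace E] [AddCommGroup E] [Module ℝ E]
    (η : Set E → ℝ) : Prop where
  homog : ∀ (l : ℝ) (A : Set E), IsCompact A → η (l • A) = |l| * η A
  subadd : ∀ A B : Set E, IsCompact A → IsCompact B → η (A + B) ≤ η A + η B

variable {X : Type*} [NormedAddCommGroup X] [NormedSpace ℝ X]

/-- The dual norm on `X*` (the dual being equipped with its weak* topology). -/
def dnorm (f : WeakDual ℝ X) : ℝ := ‖WeakDual.toStrongDual f‖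

/-- The closed unit ball of `X*`. -/
def dualBall (X : Type*) [NormedAddCommGroup X] [NormedSpace ℝ X] :
    Set (WeakDual ℝ X) := {f | dnorm f ≤ 1}

/-- The slice derivation `⟨η⟩'_ε(A)`: the points of `A` such that every weak*-closed
halfspace containing them meets `A` in a set of `η`-measure at least `ε`. -/
def sliceD (η : Set (WeakDual ℝ X) → ℝ) (ε : ℝ) (A : Set (WeakDual ℝ X)) :
    Set (WeakDual ℝ X) :=
  {x | x ∈ A ∧ ∀ (f : X) (c : ℝ), c ≤ x f → ε ≤ η (A ∩ {y | c ≤ y f})}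

/-- Transfinite iterates `⟨η⟩^γ_ε(A)` of the slice derivation. -/
def sliceIter (η : Set (WeakDual ℝ X) → ℝ) (ε : ℝ) (A : Set (WeakDual ℝ X))
    (γ : Ordinal.{0}) : Set (WeakDual ℝ X) :=
  Ordinal.limitRecOn γ A (fun _ S => sliceD η ε S)
    (fun γ _ ih => ⋂ β : {β : Ordinal.{0} // β < γ}, ih β.1 β.2)

/-- A weak*-closed halfspace of `X*`. -/
def IsHalfspace (H : Set (WeakDual ℝ X)) : Prop :=
  ∃ (f : X) (c : ℝ), H = {y : WeakDual ℝ X | c ≤ y f}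

/-- The Kuratowski measure of non compactness associated to a (dual) norm `Nd`:
the infimum of all `ε > 0` such that `A` can be covered by finitely many balls of
diameter `ε` (i.e. of radius `ε / 2`). -/
def kurN (Nd : WeakDual ℝ X → ℝ) (A : Set (WeakDual ℝ X)) : ℝ :=
  sInf {ε : ℝ | 0 < ε ∧
    ∃ F : Finset (WeakDual ℝ X), A ⊆ ⋃ c ∈ F, {y | Nd (y - c) ≤ ε / 2}}

/-- The Kuratowski measure of non compactness on `X*`. -/
def kur (A : Set (WeakDual ℝ X)) : ℝ := kurN dnorm A

/-- The iterated sets `A^ε_β` of the convex Szlenk derivation: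
`A^ε_{β+1}` is the weak*-closed convex hull of `[σ]'_ε(A^ε_β)`. -/
def convIter (ε : ℝ) (K : Set (WeakDual ℝ X)) (γ : Ordinal.{0}) : Set (WeakDual ℝ X) :=
  Ordinal.limitRecOn γ K (fun _ S => closure (convexHull ℝ (frag kur ε S)))
    (fun γ _ ih => ⋂ β : {β : Ordinal.{0} // β < γ}, ih β.1 β.2)

/-- The families `𝒯_α` of trees on `ℕ`. A tree is a set of finite sequences of
naturals (closed under initial segments); the root is the empty sequence, and
`(n)⌢s` is represented by `n :: s`. `𝒯_0 = {{∅}}`, and `T ∈ 𝒯_α` for `α ≥ 1` if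
`T = {∅} ∪ ⋃_k (n_k)⌢T_k` with `n_k` strictly increasing, `T_k ∈ 𝒯_{α_k}`, where
`α_k = β` for all `k` if `α = β + 1`, and `α_k ↗ α` if `α` is a limit ordinal. -/
inductive IsTreeFam : Ordinal.{0} → Set (List ℕ) → Prop
  | zero : IsTreeFam 0 {[]}
  | node {α : Ordinal.{0}} (nk : ℕ → ℕ) (αk : ℕ → Ordinal.{0}) (Tk : ℕ → Set (List ℕ))
      (hnk : StrictMono nk) (hTk : ∀ k, IsTreeFam (αk k) (Tk k))
      (hα : (∃ β, α = β + 1 ∧ ∀ k, αk k = β) ∨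
            (Order.IsSuccLimit α ∧ StrictMono αk ∧ α = ⨆ k, αk k)) :
      IsTreeFam α ({[]} ∪ ⋃ k, (List.cons (nk k)) '' Tk k)

/-- A family `(x_s)_{s ∈ T}` is weak*-continuous: `x_{s⌢n} → x_s` (in the ambient,
i.e. weak*, topology) along the children of every node `s` of `T`. -/
def IsContFam [TopologicalSpace E] (T : Set (List ℕ)) (x : List ℕ → E) : Prop :=
  ∀ s ∈ T, Tendsto (fun n : ℕ => x (s ++ [n]))
    (atTop ⊓ 𝓟 {n : ℕ | s ++ [n] ∈ T}) (𝓝 (x s))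

/-- A family `(x_s)_{s ∈ T}` in `X*` is `ε`-separated: `‖x_s - x_{s⌢n}‖ ≥ ε`. -/
def IsSepFam (ε : ℝ) (T : Set (List ℕ)) (x : List ℕ → WeakDual ℝ X) : Prop :=
  ∀ s ∈ T, ∀ n : ℕ, s ++ [n] ∈ T → ε ≤ dnorm (x s - x (s ++ [n]))

/-- Norm distance from a point of `X*` to a subset of `X*`. -/
def ddist (f : WeakDual ℝ X) (A : Set (WeakDual ℝ X)) : ℝ :=
  sInf ((fun g => dnorm (f - g)) '' A)

/-- The product `η₁ × η₂` of two measures of non compactness. -/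
def prodMNC {X₁ X₂ : Type*} [NormedAddCommGroup X₁] [NormedSpace ℝ X₁]
    [NormedAddCommGroup X₂] [NormedSpace ℝ X₂]
    (η₁ : Set (WeakDual ℝ X₁) → ℝ) (η₂ : Set (WeakDual ℝ X₂) → ℝ)
    (A : Set (WeakDual ℝ X₁ × WeakDual ℝ X₂)) : ℝ :=
  sInf {ε : ℝ | 0 < ε ∧ ∃ (n : ℕ) (A₁ : Fin n → Set (WeakDual ℝ X₁))
      (A₂ : Fin n → Set (WeakDual ℝ X₂)),
      (∀ i, IsCompact (A₁ i) ∧ IsCompact (A₂ i) ∧ η₁ (A₁ i) < ε ∧ η₂ (A₂ i) < ε) ∧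
      A ⊆ ⋃ i, A₁ i ×ˢ A₂ i}

/-- The dual norm on `X*` associated to an (equivalent) norm `N` on `X`. -/
def dualNormOf (N : X → ℝ) (f : WeakDual ℝ X) : ℝ :=
  sSup ((fun x => f x) '' {x : X | N x ≤ 1})

/-- The closed unit ball of the dual norm associated to a norm `N` on `X`. -/
def dualBallOf (N : X → ℝ) : Set (WeakDual ℝ X) :=
  {f : WeakDual ℝ X | ∀ x : X, |f x| ≤ N x}

section Aux

section FragGeneric

variable {E : Type*} [TopologicalSpace E] {η : Set E → ℝ} {ε : ℝ}

lemma frag_subset (η : Set E → ℝ) (ε : ℝ) (A : Set E) : frag η ε A ⊆ A := fun _ hx => hx.1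

lemma isClosed_frag (η : Set E → ℝ) (ε : ℝ) {A : Set E} (hA : IsClosed A) :
    IsClosed (frag η ε A) := by
  have hO : IsOpen {x : E | ∃ U ∈ 𝓝 x, η (A ∩ closure U) < ε} := by
    rw [isOpen_iff_mem_nhds]
    rintro x ⟨U, hU, hlt⟩
    refine Filter.mem_of_superset (interior_mem_nhds.2 hU) fun y hy => ?_
    exact ⟨U, mem_nhds_iff.2 ⟨interior U, interior_subset, isOpen_interior, hy⟩, hlt⟩
  have he : frag η ε A = A ∩ {x : E | ∃ U ∈ 𝓝 x, η (A ∩ closure U) < ε}ᶜ := by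
    ext x
    simp only [frag, mem_setOf_eq, mem_inter_iff, mem_compl_iff, not_exists, not_and, not_lt]
  rw [he]
  exact hA.inter hO.isClosed_compl

/-- Finite iterates of the fragment derivation. -/
def fragN (η : Set E → ℝ) (ε : ℝ) : ℕ → Set E → Set E
  | 0, A => A
  | k + 1, A => frag η ε (fragN η ε k A)

@[simp] lemma fragN_zero (η : Set E → ℝ) (ε : ℝ) (A : Set E) : fragN η ε 0 A = A := rfl

lemma fragN_succ (η : Set E → ℝ) (ε : ℝ) (A : Set E) (k : ℕ) :
    fragN η ε (k + 1) A = frag η ε (fragN η ε k A) := rfl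

lemma fragN_subset (η : Set E → ℝ) (ε : ℝ) (A : Set E) : ∀ k, fragN η ε k A ⊆ A
  | 0 => subset_rfl
  | k + 1 => (frag_subset _ _ _).trans (fragN_subset η ε A k)

lemma fragN_anti_succ (η : Set E → ℝ) (ε : ℝ) (A : Set E) (k : ℕ) :
    fragN η ε (k + 1) A ⊆ fragN η ε k A := frag_subset _ _ _

lemma fragN_anti (η : Set E → ℝ) (ε : ℝ) (A : Set E) {k l : ℕ} (h : k ≤ l) :
    fragN η ε l A ⊆ fragN η ε k A := by
  induction h with
  | refl => exact subset_rfl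
  | step h ih => exact Trans.trans (fragN_anti_succ η ε A _) ih

lemma isClosed_fragN (η : Set E → ℝ) (ε : ℝ) {A : Set E} (hA : IsClosed A) (k : ℕ) :
    IsClosed (fragN η ε k A) := by
  induction k with
  | zero => exact hA
  | succ k ih => exact isClosed_frag η ε ih

lemma isCompact_fragN [T2Space E] (η : Set E → ℝ) (ε : ℝ) {A : Set E} (hA : IsCompact A)
    (k : ℕ) : IsCompact (fragN η ε k A) :=
  hA.of_isClosed_subset (isClosed_fragN η ε hA.isClosed k) (fragN_subset η ε A k)

lemma fragIter_zero (η : Set E → ℝ) (ε : ℝ) (A : Set E) : fragIter η ε A 0 = A := by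
  unfold fragIter; exact Ordinal.limitRecOn_zero _ _ _

lemma fragIter_succ (η : Set E → ℝ) (ε : ℝ) (A : Set E) (γ : Ordinal) :
    fragIter η ε A (Order.succ γ) = frag η ε (fragIter η ε A γ) := by
  unfold fragIter; exact Ordinal.limitRecOn_succ _ _ _ _

lemma fragIter_limit (η : Set E → ℝ) (ε : ℝ) (A : Set E) {γ : Ordinal} (h : Order.IsSuccLimit γ) :
    fragIter η ε A γ = ⋂ β : {β : Ordinal.{0} // β < γ}, fragIter η ε A β.1 := by
  unfold fragIter; exact Ordinal.limitRecOn_limit _ _ _ _ h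

lemma fragIter_natCast (η : Set E → ℝ) (ε : ℝ) (A : Set E) (k : ℕ) :
    fragIter η ε A (k : Ordinal) = fragN η ε k A := by
  induction k with
  | zero => simpa using fragIter_zero η ε A
  | succ k ih =>
    have h1 : ((k + 1 : ℕ) : Ordinal) = Order.succ (k : Ordinal) := by
      rw [Nat.cast_succ, Ordinal.add_one_eq_succ]
    rw [h1, fragIter_succ, ih, fragN_succ]

lemma fragIter_omega0 (η : Set E → ℝ) (ε : ℝ) (A : Set E) :
    fragIter η ε A Ordinal.omega0 = ⋂ k : ℕ, fragN η ε k A := by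
  rw [fragIter_limit η ε A Ordinal.isSuccLimit_omega0]
  ext x
  simp only [mem_iInter]
  constructor
  · intro hx k
    have h1 := hx ⟨(k : Ordinal), Ordinal.nat_lt_omega0 k⟩
    rwa [fragIter_natCast η ε A k] at h1
  · rintro hx ⟨β, hβ⟩
    obtain ⟨k, rfl⟩ := Ordinal.lt_omega0.1 hβ
    rw [fragIter_natCast η ε A k]
    exact hx k


end FragGeneric

section WeakDualAux

variable {X : Type*} [NormedAddCommGroup X] [NormedSpace ℝ X]

lemma dnorm_nonneg (f : WeakDual ℝ X) : 0 ≤ dnorm f := norm_nonneg _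

lemma dnorm_smul (c : ℝ) (f : WeakDual ℝ X) : dnorm (c • f) = |c| * dnorm f := by
  simp only [dnorm, map_smul, norm_smul, Real.norm_eq_abs]

lemma dnorm_add_le (f g : WeakDual ℝ X) : dnorm (f + g) ≤ dnorm f + dnorm g := by
  simp only [dnorm, map_add]; exact norm_add_le _ _

lemma dnorm_pos {f : WeakDual ℝ X} (hf : f ≠ 0) : 0 < dnorm f := by
  simp only [dnorm]
  rw [norm_pos_iff]
  exact fun hc => hf (by simpa using (LinearEquiv.map_eq_zero_iff _).1 hc)

lemma isCompact_dualBall : IsCompact (dualBall X) := by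
  have h : dualBall X =
      WeakDual.toStrongDual ⁻¹' Metric.closedBall (0 : StrongDual ℝ X) 1 := by
    ext f; simp [dualBall, dnorm]
  rw [h]; exact WeakDual.isCompact_closedBall (𝕜 := ℝ) 0 1

lemma mem_smul_dualBall {r : ℝ} (hr : 0 < r) {y : WeakDual ℝ X} :
    y ∈ r • dualBall X ↔ dnorm y ≤ r := by
  constructor
  · rintro ⟨z, hz, rfl⟩
    calc dnorm (r • z) = |r| * dnorm z := dnorm_smul r z
    _ ≤ |r| * 1 := by
        exact mul_le_mul_of_nonneg_left hz (abs_nonneg r)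
    _ = r := by rw [mul_one, abs_of_pos hr]
  · intro h
    refine ⟨r⁻¹ • y, ?_, ?_⟩
    · show dnorm _ ≤ 1
      rw [dnorm_smul, abs_inv, abs_of_pos hr]
      rw [inv_mul_le_iff₀ hr, mul_one]
      exact h
    · show r • r⁻¹ • y = y
      rw [smul_smul, mul_inv_cancel₀ hr.ne', one_smul]

lemma neg_mem_smul_dualBall {r : ℝ} {y : WeakDual ℝ X} (hy : y ∈ r • dualBall X) :
    -y ∈ r • dualBall X := by
  obtain ⟨z, hz, rfl⟩ := hy
  refine ⟨-z, ?_, by show r • -z = -(r • z); rw [smul_neg]⟩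
  show dnorm _ ≤ 1
  simpa [dnorm, dualBall] using hz

lemma sep_compact {K : Set (WeakDual ℝ X)} (hK : IsCompact K) {x : WeakDual ℝ X}
    (hx : x ∉ K) : ∃ U, IsOpen U ∧ x ∈ U ∧ closure U ∩ K = ∅ := by
  have h1 : Kᶜ ∈ 𝓝 x := hK.isClosed.isOpen_compl.mem_nhds hx
  obtain ⟨t, ht, htc, hts⟩ := exists_mem_nhds_isClosed_subset h1
  refine ⟨interior t, isOpen_interior, mem_interior_iff_mem_nhds.2 ht, ?_⟩
  have h2 : closure (interior t) ⊆ Kᶜ := (closure_minimal interior_subset htc).trans hts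
  rw [eq_empty_iff_forall_notMem]; exact fun y hy => h2 hy.1 hy.2

lemma exists_dnorm_bound [CompleteSpace X] {S : Set (WeakDual ℝ X)} (hS : IsCompact S) :
    ∃ M : ℝ, 0 < M ∧ ∀ y ∈ S, dnorm y ≤ M := by
  have hpt : ∀ x : X, ∃ C, ∀ i : S, ‖(WeakDual.toStrongDual i.1) x‖ ≤ C := by
    intro x
    obtain ⟨r, hr⟩ := (hS.image (WeakDual.eval_continuous x)).isBounded.subset_closedBall 0
    exact ⟨r, fun i => by simpa [dist_zero_right] using hr ⟨i.1, i.2, rfl⟩⟩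
  obtain ⟨C', hC'⟩ := banach_steinhaus hpt
  exact ⟨max C' 1, by positivity, fun y hy => le_trans (hC' ⟨y, hy⟩) (le_max_left _ _)⟩

variable [CompleteSpace X]

/-- A package of properties of a measure of non-compactness sufficient for the induction. -/
structure NicePkg (η : Set (WeakDual ℝ X) → ℝ) : Prop where
  nonneg : ∀ S, 0 ≤ η S
  bound : ∀ (S : Set (WeakDual ℝ X)) (M : ℝ), 0 ≤ M → (∀ y ∈ S, dnorm y ≤ M) → η S ≤ 2 * M
  mono : ∀ {S T : Set (WeakDual ℝ X)}, S ⊆ T → IsCompact T → η S ≤ η T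
  cover : ∀ (S : Set (WeakDual ℝ X)) (p : ℕ) (D : ℕ → Set (WeakDual ℝ X)) (c : ℝ), 0 < c →
    (∀ i, i < p → IsCompact (D i)) → (∀ i, i < p → η (D i) < c) →
    (S ⊆ ⋃ i ∈ Finset.range p, D i) → η S < c
  scale : ∀ (ν : ℝ), ν ≠ 0 → ∀ S, η (ν • S) = |ν| * η S
  thicken : ∀ (S : Set (WeakDual ℝ X)), IsCompact S → ∀ r : ℝ, 0 < r →
    η (S + r • dualBall X) ≤ η S + 2 * r

namespace NicePkg

variable {η : Set (WeakDual ℝ X) → ℝ}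

omit [CompleteSpace X] in
lemma empty' (pkg : NicePkg η) : η ∅ = 0 :=
  le_antisymm (by simpa using pkg.bound ∅ 0 le_rfl (by simp)) (pkg.nonneg ∅)

lemma cover_finset {ι : Type*} (pkg : NicePkg η) (S : Set (WeakDual ℝ X)) (F : Finset ι)
    (D : ι → Set (WeakDual ℝ X)) (c : ℝ) (hc : 0 < c) (hcomp : ∀ i ∈ F, IsCompact (D i))
    (hlt : ∀ i ∈ F, η (D i) < c) (hsub : S ⊆ ⋃ i ∈ F, D i) : η S < c := by
  classical
  set l := F.toList with hl
  have hmem : ∀ i ∈ l, i ∈ F := fun i hi => Finset.mem_toList.1 hi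
  refine pkg.cover S l.length
    (fun n => if h : n < l.length then D (l.get ⟨n, h⟩) else ∅) c hc ?_ ?_ ?_
  · intro i hi
    show IsCompact (if h : i < l.length then D (l.get ⟨i, h⟩) else ∅)
    rw [dif_pos hi]
    exact hcomp _ (hmem _ (l.get_mem _))
  · intro i hi
    show η (if h : i < l.length then D (l.get ⟨i, h⟩) else ∅) < c
    rw [dif_pos hi]
    exact hlt _ (hmem _ (l.get_mem _))
  · intro x hx
    obtain ⟨i, hiF, hxD⟩ := by simpa only [mem_iUnion, exists_prop] using hsub hx
    obtain ⟨n, hn⟩ := List.mem_iff_get.1 (Finset.mem_toList.2 hiF)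
    simp only [mem_iUnion, exists_prop, Finset.mem_range]
    refine ⟨n, n.2, ?_⟩
    show x ∈ (if h : (n : ℕ) < l.length then D (l.get ⟨n, h⟩) else ∅)
    rw [dif_pos n.2, hn]; exact hxD

lemma cover2 (pkg : NicePkg η) {S D₁ D₂ : Set (WeakDual ℝ X)} {c : ℝ} (hc : 0 < c) (h1 : IsCompact D₁)
    (h2 : IsCompact D₂) (l1 : η D₁ < c) (l2 : η D₂ < c) (hsub : S ⊆ D₁ ∪ D₂) : η S < c := by
  classical
  refine pkg.cover_finset S {0, 1} (fun i : ℕ => if i = 0 then D₁ else D₂) c hc ?_ ?_ ?_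
  · intro i hi
    rcases Finset.mem_insert.1 hi with rfl | hi
    · simpa using h1
    · simp only [Finset.mem_singleton] at hi; subst hi; simpa using h2
  · intro i hi
    rcases Finset.mem_insert.1 hi with rfl | hi
    · simpa using l1
    · simp only [Finset.mem_singleton] at hi; subst hi; simpa using l2
  · intro x hx
    simp only [mem_iUnion, exists_prop]
    rcases hsub hx with h | h
    · exact ⟨0, by simp, by simp [h]⟩
    · exact ⟨1, by simp, by simp [h]⟩

lemma exists_open_escape (pkg : NicePkg η) {S : Set (WeakDual ℝ X)} (hS : IsCompact S)
    {ε : ℝ} {x : WeakDual ℝ X} (hx : x ∈ S) (hfrag : x ∉ frag η ε S) :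
    ∃ V, IsOpen V ∧ x ∈ V ∧ η (S ∩ closure V) < ε := by
  simp only [frag, mem_setOf_eq, not_and, not_forall, not_le] at hfrag
  obtain ⟨U, hU, hlt⟩ := hfrag hx
  refine ⟨interior U, isOpen_interior, mem_interior_iff_mem_nhds.2 hU, ?_⟩
  have h1 : η (S ∩ closure (interior U)) ≤ η (S ∩ closure U) :=
    pkg.mono (inter_subset_inter_right _ (closure_mono interior_subset))
      (hS.inter_right isClosed_closure)
  exact lt_of_le_of_lt h1 hlt

lemma frag_mono (pkg : NicePkg η) {S T : Set (WeakDual ℝ X)} {ε₁ ε₂ : ℝ} (hST : S ⊆ T)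
    (hT : IsCompact T) (hε : ε₁ ≤ ε₂) : frag η ε₂ S ⊆ frag η ε₁ T := by
  rintro x ⟨hxS, hx⟩
  refine ⟨hST hxS, fun U hU => ?_⟩
  refine le_trans hε (le_trans (hx U hU) ?_)
  exact pkg.mono (inter_subset_inter_left _ hST) (hT.inter_right isClosed_closure)

lemma not_mem_frag_escape (pkg : NicePkg η) {E : Set (WeakDual ℝ X)} (hE : IsCompact E)
    {ε : ℝ} (hε : 0 < ε) {x : WeakDual ℝ X} (hxE : x ∉ frag η ε E) :
    ∃ U ∈ 𝓝 x, η (E ∩ closure U) < ε := by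
  by_cases hxEm : x ∈ E
  · obtain ⟨V, hVo, hxV, hlt⟩ := exists_open_escape pkg hE hxEm hxE
    exact ⟨V, hVo.mem_nhds hxV, hlt⟩
  · obtain ⟨U, hUo, hxU, hdisj⟩ := sep_compact hE hxEm
    refine ⟨U, hUo.mem_nhds hxU, ?_⟩
    have : E ∩ closure U = ∅ := by
      rw [eq_empty_iff_forall_notMem]
      intro y hy
      rw [eq_empty_iff_forall_notMem] at hdisj
      exact hdisj y ⟨hy.2, hy.1⟩
    rw [this, pkg.empty']
    exact hε

lemma frag_union (pkg : NicePkg η) {C D : Set (WeakDual ℝ X)} (hC : IsCompact C)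
    (hD : IsCompact D) {ε : ℝ} (hε : 0 < ε) :
    frag η ε (C ∪ D) ⊆ frag η ε C ∪ frag η ε D := by
  intro x hx
  by_contra hn
  rw [mem_union] at hn
  push_neg at hn
  obtain ⟨U₁, hU₁, hl₁⟩ := not_mem_frag_escape pkg hC hε hn.1
  obtain ⟨U₂, hU₂, hl₂⟩ := not_mem_frag_escape pkg hD hε hn.2
  have hcov : (C ∪ D) ∩ closure (U₁ ∩ U₂) ⊆ (C ∩ closure U₁) ∪ (D ∩ closure U₂) := by
    rintro y ⟨hy, hycl⟩
    rcases hy with hy | hy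
    · exact Or.inl ⟨hy, closure_mono inter_subset_left hycl⟩
    · exact Or.inr ⟨hy, closure_mono inter_subset_right hycl⟩
  have hlt : η ((C ∪ D) ∩ closure (U₁ ∩ U₂)) < ε :=
    pkg.cover2 hε (hC.inter_right isClosed_closure) (hD.inter_right isClosed_closure)
      hl₁ hl₂ hcov
  exact absurd (hx.2 _ (inter_mem hU₁ hU₂)) (not_le.2 hlt)

lemma fragN_mono (pkg : NicePkg η) {S T : Set (WeakDual ℝ X)} {ε₁ ε₂ : ℝ} (hST : S ⊆ T)
    (hT : IsCompact T) (hε : ε₁ ≤ ε₂) (k : ℕ) : fragN η ε₂ k S ⊆ fragN η ε₁ k T := by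
  induction k with
  | zero => exact hST
  | succ k ih =>
    rw [fragN_succ, fragN_succ]
    exact frag_mono pkg ih (isCompact_fragN η ε₁ hT k) hε

lemma fragN_union (pkg : NicePkg η) {C D : Set (WeakDual ℝ X)} (hC : IsCompact C)
    (hD : IsCompact D) {ε : ℝ} (hε : 0 < ε) (k : ℕ) :
    fragN η ε k (C ∪ D) ⊆ fragN η ε k C ∪ fragN η ε k D := by
  induction k with
  | zero => exact subset_rfl
  | succ k ih =>
    rw [fragN_succ, fragN_succ, fragN_succ]
    refine (frag_mono pkg ih ((isCompact_fragN η ε hC k).union (isCompact_fragN η ε hD k))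
      le_rfl).trans ?_
    exact frag_union pkg (isCompact_fragN η ε hC k) (isCompact_fragN η ε hD k) hε

lemma frag_thicken (pkg : NicePkg η) {S : Set (WeakDual ℝ X)} (hS : IsCompact S)
    {r ε : ℝ} (hr : 0 < r) (hε : 0 < ε) :
    frag η (ε + 2 * r) (S + r • dualBall X) ⊆ frag η ε S + r • dualBall X := by
  intro x hx
  by_contra hxn
  have hF : IsCompact (frag η ε S) :=
    hS.of_isClosed_subset (isClosed_frag η ε hS.isClosed) (frag_subset η ε S)
  have hrB : IsCompact ((r : ℝ) • dualBall X) := isCompact_dualBall.smul r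
  have hFB : IsCompact (frag η ε S + r • dualBall X) := hF.add hrB
  obtain ⟨U₀, hU₀o, hxU₀, hU₀disj⟩ := sep_compact hFB hxn
  set Q := ((S ×ˢ (r • dualBall X)) ∩ (fun p : WeakDual ℝ X × WeakDual ℝ X => p.1 + p.2) ⁻¹'
    (closure U₀)) with hQdef
  have hQ : IsCompact Q :=
    (hS.prod hrB).inter_right (isClosed_closure.preimage continuous_add)
  set T := Prod.fst '' Q with hTdef
  have hT : IsCompact T := hQ.image continuous_fst
  have hTprop : ∀ s ∈ T, s ∈ S ∧ s ∉ frag η ε S := by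
    rintro s ⟨p, hp, rfl⟩
    obtain ⟨⟨hp1, hp2⟩, hp3⟩ := hp
    refine ⟨hp1, fun hcon => ?_⟩
    have : p.1 + p.2 ∈ (frag η ε S + r • dualBall X) ∩ closure U₀ :=
      ⟨add_mem_add hcon hp2, hp3⟩
    rw [inter_comm] at this
    rw [eq_empty_iff_forall_notMem] at hU₀disj
    exact hU₀disj _ this
  have hesc : ∀ s ∈ T, ∃ V, IsOpen V ∧ s ∈ V ∧ η (S ∩ closure V) < ε := fun s hs =>
    exists_open_escape pkg hS (hTprop s hs).1 (hTprop s hs).2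
  choose! V hVo hVmem hVlt using hesc
  obtain ⟨t, ht⟩ := hT.elim_finite_subcover (fun s : T => V s.1)
    (fun s => hVo s.1 s.2) (fun s hs => mem_iUnion.2 ⟨⟨s, hs⟩, hVmem s hs⟩)
  have hkey : η ((S + r • dualBall X) ∩ closure U₀) < ε + 2 * r := by
    refine pkg.cover_finset _ t (fun s : T => (S ∩ closure (V s.1)) + r • dualBall X)
      (ε + 2 * r) ?_ ?_ ?_ ?_
    · linarith
    · intro s hs
      exact ((hS.inter_right isClosed_closure).add hrB)
    · intro s hs
      calc η ((S ∩ closure (V s.1)) + r • dualBall X)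
          ≤ η (S ∩ closure (V s.1)) + 2 * r :=
            pkg.thicken _ (hS.inter_right isClosed_closure) r hr
        _ < ε + 2 * r := by
            have := hVlt s.1 s.2
            linarith
    · rintro y ⟨⟨a, ha, w, hw, rfl⟩, hycl⟩
      have haT : a ∈ T := by
        refine ⟨(a, w), ⟨⟨ha, hw⟩, hycl⟩, rfl⟩
      obtain ⟨s, hst, hsV⟩ := by
        simpa only [mem_iUnion, exists_prop] using ht haT
      simp only [mem_iUnion, exists_prop]
      exact ⟨s, hst, add_mem_add ⟨ha, subset_closure hsV⟩ hw⟩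
  exact absurd (hx.2 U₀ (hU₀o.mem_nhds hxU₀)) (not_le.2 hkey)


omit [CompleteSpace X] in
lemma smul_smul_set_cancel {ν : ℝ} (hν : ν ≠ 0) (U : Set (WeakDual ℝ X)) :
    ν • ν⁻¹ • U = U := by
  ext y
  rw [Set.mem_smul_set_iff_inv_smul_mem₀ hν, Set.mem_smul_set_iff_inv_smul_mem₀ (inv_ne_zero hν)]
  rw [inv_inv, smul_smul, mul_inv_cancel₀ hν, one_smul]

omit [CompleteSpace X] in
lemma mem_nhds_smul_iff {ν : ℝ} (hν : ν ≠ 0) (z : WeakDual ℝ X) (U : Set (WeakDual ℝ X)) :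
    U ∈ 𝓝 (ν • z) ↔ ν⁻¹ • U ∈ 𝓝 z := by
  set h : WeakDual ℝ X ≃ₜ WeakDual ℝ X := Homeomorph.smulOfNeZero ν hν with hh
  have h1 : 𝓝 (ν • z) = Filter.map h (𝓝 z) := (h.map_nhds_eq z).symm
  rw [h1, Filter.mem_map]
  have h2 : h ⁻¹' U = ν⁻¹ • U := by
    ext y
    rw [Set.mem_smul_set_iff_inv_smul_mem₀ (inv_ne_zero hν), inv_inv]
    simp only [mem_preimage, hh, Homeomorph.smulOfNeZero, Homeomorph.smul_apply]
    rfl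
  rw [h2]

omit [CompleteSpace X] in
lemma smul_inter_closure_eq {ν : ℝ} (hν : ν ≠ 0) (S U : Set (WeakDual ℝ X)) :
    (ν • S) ∩ closure U = ν • (S ∩ closure (ν⁻¹ • U)) := by
  calc (ν • S) ∩ closure U = (ν • S) ∩ closure (ν • ν⁻¹ • U) := by
        rw [smul_smul_set_cancel hν]
    _ = (ν • S) ∩ (ν • closure (ν⁻¹ • U)) := by rw [closure_smul₀' hν]
    _ = ν • (S ∩ closure (ν⁻¹ • U)) := (Set.smul_set_inter₀ hν).symm

lemma smul_frag_subset (pkg : NicePkg η) {ν : ℝ} (hν : ν ≠ 0) (ε' : ℝ)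
    (S : Set (WeakDual ℝ X)) :
    ν • frag η ε' S ⊆ frag η (|ν| * ε') (ν • S) := by
  rintro _ ⟨z, hz, rfl⟩
  refine ⟨Set.smul_mem_smul_set hz.1, fun U hU => ?_⟩
  have hU' : ν⁻¹ • U ∈ 𝓝 z := (mem_nhds_smul_iff hν z U).1 hU
  have h2 := hz.2 _ hU'
  rw [smul_inter_closure_eq hν, pkg.scale ν hν]
  exact mul_le_mul_of_nonneg_left h2 (abs_nonneg ν)

lemma frag_smul (pkg : NicePkg η) {ν : ℝ} (hν : ν ≠ 0) (ε : ℝ) (S : Set (WeakDual ℝ X)) :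
    frag η ε (ν • S) = ν • frag η (ε / |ν|) S := by
  have habs : (0:ℝ) < |ν| := abs_pos.2 hν
  apply subset_antisymm
  · have h1 := smul_frag_subset pkg (inv_ne_zero hν) ε (ν • S)
    have h2 : ν⁻¹ • ν • S = S := by
      have := smul_smul_set_cancel (inv_ne_zero hν) S
      rwa [inv_inv] at this
    rw [h2, abs_inv] at h1
    intro x hx
    have hx' : ν⁻¹ • x ∈ frag η (|ν|⁻¹ * ε) S := h1 (Set.smul_mem_smul_set hx)
    have hx'' : ν • ν⁻¹ • x ∈ ν • frag η (|ν|⁻¹ * ε) S := Set.smul_mem_smul_set hx'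
    rw [smul_smul, mul_inv_cancel₀ hν, one_smul] at hx''
    rwa [show ε / |ν| = |ν|⁻¹ * ε from by field_simp]
  · have h1 := smul_frag_subset pkg hν (ε / |ν|) S
    rwa [show |ν| * (ε / |ν|) = ε from by field_simp] at h1

lemma fragN_smul (pkg : NicePkg η) {ν : ℝ} (hν : ν ≠ 0) (ε : ℝ) (S : Set (WeakDual ℝ X))
    (k : ℕ) : fragN η ε k (ν • S) = ν • fragN η (ε / |ν|) k S := by
  induction k with
  | zero => rfl
  | succ k ih => rw [fragN_succ, fragN_succ, ih, frag_smul pkg hν]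

lemma fragN_thicken (pkg : NicePkg η) {S : Set (WeakDual ℝ X)} (hS : IsCompact S)
    {r ε : ℝ} (hr : 0 < r) (hε : 0 < ε) (k : ℕ) :
    fragN η (ε + 2 * r) k (S + r • dualBall X) ⊆ fragN η ε k S + r • dualBall X := by
  induction k with
  | zero => exact subset_rfl
  | succ k ih =>
    rw [fragN_succ, fragN_succ]
    have hrB : IsCompact ((r : ℝ) • dualBall X) := isCompact_dualBall.smul r
    refine (frag_mono pkg ih ((isCompact_fragN η ε hS k).add hrB) le_rfl).trans ?_
    exact frag_thicken pkg (isCompact_fragN η ε hS k) hr hε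

end NicePkg

/-- The countable intersection of the finite fragment iterates. -/
def fragOm {E : Type*} [TopologicalSpace E] (η : Set E → ℝ) (ε : ℝ) (S : Set E) : Set E :=
  ⋂ k : ℕ, fragN η ε k S

lemma fragIter_omega0_eq {E : Type*} [TopologicalSpace E] (η : Set E → ℝ) (ε : ℝ) (S : Set E) :
    fragIter η ε S Ordinal.omega0 = fragOm η ε S := fragIter_omega0 η ε S

namespace NicePkg

variable {X : Type*} [NormedAddCommGroup X] [NormedSpace ℝ X] [CompleteSpace X]
variable {η : Set (WeakDual ℝ X) → ℝ}

lemma fragOm_mono (pkg : NicePkg η) {S T : Set (WeakDual ℝ X)} {ε₁ ε₂ : ℝ} (hST : S ⊆ T)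
    (hT : IsCompact T) (hε : ε₁ ≤ ε₂) : fragOm η ε₂ S ⊆ fragOm η ε₁ T :=
  iInter_mono fun k => fragN_mono pkg hST hT hε k

lemma fragOm_union (pkg : NicePkg η) {C D : Set (WeakDual ℝ X)} (hC : IsCompact C)
    (hD : IsCompact D) {ε : ℝ} (hε : 0 < ε) :
    fragOm η ε (C ∪ D) ⊆ fragOm η ε C ∪ fragOm η ε D := by
  intro x hx
  by_cases h : ∀ k, x ∈ fragN η ε k C
  · exact Or.inl (mem_iInter.2 h)
  · push_neg at h
    obtain ⟨k₀, hk₀⟩ := h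
    refine Or.inr (mem_iInter.2 fun k => ?_)
    have h1 := fragN_union pkg hC hD hε (max k k₀) (mem_iInter.1 hx (max k k₀))
    rcases h1 with h1 | h1
    · exact absurd (fragN_anti η ε C (le_max_right k k₀) h1) hk₀
    · exact fragN_anti η ε D (le_max_left k k₀) h1

lemma fragOm_smul (pkg : NicePkg η) {ν : ℝ} (hν : ν ≠ 0) (ε : ℝ) (S : Set (WeakDual ℝ X)) :
    fragOm η ε (ν • S) = ν • fragOm η (ε / |ν|) S := by
  ext y
  simp only [fragOm, mem_iInter, Set.mem_smul_set_iff_inv_smul_mem₀ hν]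
  constructor
  · intro h k
    have := h k
    rwa [fragN_smul pkg hν, Set.mem_smul_set_iff_inv_smul_mem₀ hν] at this
  · intro h k
    rw [fragN_smul pkg hν, Set.mem_smul_set_iff_inv_smul_mem₀ hν]
    exact h k

lemma fragOm_thicken (pkg : NicePkg η) {S : Set (WeakDual ℝ X)} (hS : IsCompact S)
    {r ε : ℝ} (hr : 0 < r) (hε : 0 < ε) :
    fragOm η (ε + 2 * r) (S + r • dualBall X) ⊆ fragOm η ε S + r • dualBall X := by
  intro x hx
  have hrB : IsCompact ((r : ℝ) • dualBall X) := isCompact_dualBall.smul r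
  set C : ℕ → Set (WeakDual ℝ X) :=
    fun k => fragN η ε k S ∩ {z | x - z ∈ r • dualBall X} with hCdef
  have hCcl : ∀ k, IsClosed (C k) := by
    intro k
    refine (isClosed_fragN η ε hS.isClosed k).inter ?_
    exact hrB.isClosed.preimage (continuous_const.sub continuous_id)
  have hCcomp : IsCompact (C 0) := (isCompact_fragN η ε hS 0).inter_right
    (hrB.isClosed.preimage (continuous_const.sub continuous_id))
  have hCdec : ∀ k, C (k + 1) ⊆ C k :=
    fun k => inter_subset_inter_left _ (fragN_anti_succ η ε S k)
  have hCne : ∀ k, (C k).Nonempty := by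
    intro k
    have h1 : x ∈ fragN η ε k S + r • dualBall X :=
      fragN_thicken pkg hS hr hε k (mem_iInter.1 hx k)
    obtain ⟨z, hz, w, hw, hzw⟩ := Set.mem_add.1 h1
    exact ⟨z, hz, by simp only [mem_setOf_eq, ← hzw, add_sub_cancel_left]; exact hw⟩
  obtain ⟨z, hz⟩ := IsCompact.nonempty_iInter_of_sequence_nonempty_isCompact_isClosed
    C hCdec hCne hCcomp hCcl
  have hz1 : ∀ k, z ∈ fragN η ε k S := fun k => (mem_iInter.1 hz k).1
  have hz2 : x - z ∈ r • dualBall X := (mem_iInter.1 hz 0).2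
  exact Set.mem_add.2 ⟨z, mem_iInter.2 hz1, x - z, hz2, by abel⟩

lemma fragOm_biUnion_empty (pkg : NicePkg η) {ε : ℝ} (hε : 0 < ε) :
    ∀ (p : ℕ) (D : ℕ → Set (WeakDual ℝ X)), (∀ i, i < p → IsCompact (D i)) →
    (∀ i, i < p → fragOm η ε (D i) = ∅) →
    fragOm η ε (⋃ i ∈ Finset.range p, D i) = ∅ := by
  intro p
  induction p with
  | zero =>
    intro D _ _
    refine subset_empty_iff.1 fun x hx => ?_
    have := mem_iInter.1 hx 0
    simpa using this
  | succ p ih =>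
    intro D hcomp hem
    have hrest : IsCompact (⋃ i ∈ Finset.range p, D i) :=
      (Finset.range p).finite_toSet.isCompact_biUnion
        (fun i hi => hcomp i (lt_trans (Finset.mem_range.1 hi) (Nat.lt_succ_self p)))
    have hsplit : (⋃ i ∈ Finset.range (p + 1), D i) =
        D p ∪ ⋃ i ∈ Finset.range p, D i := by
      rw [Finset.range_add_one, Finset.set_biUnion_insert]
    rw [hsplit]
    refine subset_empty_iff.1 ?_
    refine (fragOm_union pkg (hcomp p (Nat.lt_succ_self p)) hrest hε).trans ?_
    rw [hem p (Nat.lt_succ_self p), ih D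
      (fun i hi => hcomp i (lt_trans hi (Nat.lt_succ_self p)))
      (fun i hi => hem i (lt_trans hi (Nat.lt_succ_self p)))]
    simp

lemma etaOmega_le' {S : Set (WeakDual ℝ X)} {ε : ℝ} (h0 : 0 < ε) (h : fragOm η ε S = ∅) :
    etaOmega η S ≤ ε := by
  apply csInf_le ⟨0, fun y hy => hy.1.le⟩
  exact ⟨h0, by rw [fragIter_omega0_eq]; exact h⟩

lemma fragOm_empty_of_bound (pkg : NicePkg η) {S : Set (WeakDual ℝ X)} {M ε : ℝ}
    (hM : 0 ≤ M) (hbd : ∀ y ∈ S, dnorm y ≤ M) (hε : 2 * M < ε) : fragOm η ε S = ∅ := by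
  have h1 : frag η ε S = ∅ := by
    rw [eq_empty_iff_forall_notMem]
    rintro x ⟨hxS, hx⟩
    have h2 := hx Set.univ Filter.univ_mem
    rw [closure_univ, inter_univ] at h2
    have h3 : η S ≤ 2 * M := pkg.bound S M hM hbd
    linarith
  rw [eq_empty_iff_forall_notMem]
  intro x hx
  have h2 := mem_iInter.1 hx 1
  rw [show fragN η ε 1 S = frag η ε S from rfl, h1] at h2
  exact h2

lemma TS_nonempty (pkg : NicePkg η) {S : Set (WeakDual ℝ X)} (hS : IsCompact S) :
    ∃ ε, 0 < ε ∧ fragOm η ε S = ∅ := by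
  obtain ⟨M, hM, hbd⟩ := exists_dnorm_bound hS
  exact ⟨2 * M + 1, by linarith, pkg.fragOm_empty_of_bound hM.le hbd (by linarith)⟩

lemma exists_small (pkg : NicePkg η) {S : Set (WeakDual ℝ X)} {c : ℝ} (hS : IsCompact S)
    (h : etaOmega η S < c) : ∃ ε, 0 < ε ∧ fragOm η ε S = ∅ ∧ ε < c := by
  obtain ⟨ε0, h0, hem⟩ := pkg.TS_nonempty hS
  have hne : Set.Nonempty {ε | 0 < ε ∧ fragIter η ε S Ordinal.omega0 = ∅} :=
    ⟨ε0, h0, by rw [fragIter_omega0_eq]; exact hem⟩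
  obtain ⟨ε, hε, hlt⟩ := exists_lt_of_csInf_lt hne h
  exact ⟨ε, hε.1, by have := hε.2; rwa [fragIter_omega0_eq] at this, hlt⟩

theorem etaOmegaPkg (pkg : NicePkg η) : NicePkg (etaOmega η) := by
  constructor
  · exact fun S => Real.sInf_nonneg fun ε hε => hε.1.le
  · intro S M hM hbd
    refine le_of_forall_pos_le_add fun δ hδ => ?_
    exact etaOmega_le' (by linarith) (pkg.fragOm_empty_of_bound hM hbd (by linarith))
  · intro S T hST hT
    refine csInf_le_csInf ⟨0, fun y hy => hy.1.le⟩ ?_ ?_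
    · obtain ⟨ε0, h0, hem⟩ := pkg.TS_nonempty hT
      exact ⟨ε0, h0, by rw [fragIter_omega0_eq]; exact hem⟩
    · rintro ε ⟨h0, hem⟩
      rw [fragIter_omega0_eq] at hem
      refine ⟨h0, ?_⟩
      rw [fragIter_omega0_eq]
      refine subset_empty_iff.1 ?_
      rw [← hem]
      exact pkg.fragOm_mono hST hT le_rfl
  · intro S p D c hc hcomp hlt hsub
    rcases Nat.eq_zero_or_pos p with rfl | hp
    · have hSempty : S = ∅ := subset_empty_iff.1 (by simpa using hsub)
      subst hSempty
      refine lt_of_le_of_lt (etaOmega_le' (half_pos hc)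
        (pkg.fragOm_empty_of_bound le_rfl (by simp) (by linarith))) (half_lt_self hc)
    · have hDi : ∀ i, i < p → ∃ ε, 0 < ε ∧ fragOm η ε (D i) = ∅ ∧ ε < c :=
        fun i hi => pkg.exists_small (hcomp i hi) (hlt i hi)
      choose! f hf0 hfe hfc using hDi
      have hne : (Finset.range p).Nonempty := Finset.nonempty_range_iff.2 hp.ne'
      set ε' := (Finset.range p).sup' hne f with hε'def
      have hle : ∀ i, i < p → f i ≤ ε' := fun i hi => Finset.le_sup' f (Finset.mem_range.2 hi)
      have hε'0 : 0 < ε' := lt_of_lt_of_le (hf0 0 hp) (hle 0 hp)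
      have hε'c : ε' < c := (Finset.sup'_lt_iff hne).2 fun i hi => hfc i (Finset.mem_range.1 hi)
      have hbig : IsCompact (⋃ i ∈ Finset.range p, D i) :=
        (Finset.range p).finite_toSet.isCompact_biUnion
          (fun i hi => hcomp i (Finset.mem_range.1 hi))
      have hOmi : ∀ i, i < p → fragOm η ε' (D i) = ∅ := by
        intro i hi
        refine subset_empty_iff.1 ?_
        rw [← hfe i hi]
        exact pkg.fragOm_mono subset_rfl (hcomp i hi) (hle i hi)
      have hOm : fragOm η ε' (⋃ i ∈ Finset.range p, D i) = ∅ :=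
        pkg.fragOm_biUnion_empty hε'0 p D hcomp hOmi
      have hOmS : fragOm η ε' S = ∅ := by
        refine subset_empty_iff.1 ?_
        rw [← hOm]
        exact pkg.fragOm_mono hsub hbig le_rfl
      exact lt_of_le_of_lt (etaOmega_le' hε'0 hOmS) hε'c
  · intro ν hν S
    have habs : (0:ℝ) < |ν| := abs_pos.2 hν
    have hset : {ε : ℝ | 0 < ε ∧ fragIter η ε (ν • S) Ordinal.omega0 = ∅} =
        |ν| • {ε : ℝ | 0 < ε ∧ fragIter η ε S Ordinal.omega0 = ∅} := by
      ext ε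
      simp only [mem_setOf_eq, Set.mem_smul_set, smul_eq_mul]
      constructor
      · rintro ⟨h0, hem⟩
        rw [fragIter_omega0_eq] at hem
        refine ⟨ε / |ν|, ⟨div_pos h0 habs, ?_⟩, by field_simp⟩
        rw [fragIter_omega0_eq]
        have h1 := pkg.fragOm_smul hν ε S
        rw [hem] at h1
        exact (Set.smul_set_eq_empty.1 h1.symm)
      · rintro ⟨δ, ⟨hδ0, hδe⟩, rfl⟩
        rw [fragIter_omega0_eq] at hδe
        refine ⟨by positivity, ?_⟩
        rw [fragIter_omega0_eq, pkg.fragOm_smul hν]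
        rw [show |ν| * δ / |ν| = δ from by field_simp, hδe]
        simp
    show sInf _ = |ν| * sInf _
    rw [hset, Real.sInf_smul_of_nonneg (abs_nonneg ν)]
    rfl
  · intro S hS r hr
    have key : ∀ ε, 0 < ε → fragOm η ε S = ∅ →
        etaOmega η (S + r • dualBall X) ≤ ε + 2 * r := by
      intro ε h0 hem
      refine etaOmega_le' (by linarith) (subset_empty_iff.1 ?_)
      refine (pkg.fragOm_thicken hS hr h0).trans ?_
      rw [hem, Set.empty_add]
    obtain ⟨ε0, hε0, hem0⟩ := pkg.TS_nonempty hS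
    have h2 : etaOmega η (S + r • dualBall X) - 2 * r ≤ etaOmega η S := by
      refine le_csInf ⟨ε0, hε0, ?_⟩ ?_
      · rw [fragIter_omega0_eq]; exact hem0
      rintro ε ⟨h0, hem⟩
      rw [fragIter_omega0_eq] at hem
      have := key ε h0 hem
      linarith
    linarith

end NicePkg

section KurPkg

variable {X : Type*} [NormedAddCommGroup X] [NormedSpace ℝ X]

/-- The defining set for `kur`. -/
def kurSet (S : Set (WeakDual ℝ X)) : Set ℝ :=
  {ε : ℝ | 0 < ε ∧ ∃ F : Finset (WeakDual ℝ X), S ⊆ ⋃ c ∈ F, {y | dnorm (y - c) ≤ ε / 2}}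

lemma kur_eq_sInf (S : Set (WeakDual ℝ X)) : kur S = sInf (kurSet S) := rfl

lemma kur_le {S : Set (WeakDual ℝ X)} {ε : ℝ} (h : ε ∈ kurSet S) : kur S ≤ ε :=
  csInf_le ⟨0, fun y hy => hy.1.le⟩ h

lemma kurSet_mono_eps {S : Set (WeakDual ℝ X)} {ε₁ ε₂ : ℝ} (h : ε₁ ∈ kurSet S)
    (h12 : ε₁ ≤ ε₂) : ε₂ ∈ kurSet S := by
  obtain ⟨h0, F, hF⟩ := h
  refine ⟨lt_of_lt_of_le h0 h12, F, hF.trans ?_⟩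
  refine iUnion₂_mono fun c _ => ?_
  intro y hy
  simp only [mem_setOf_eq] at hy ⊢
  linarith

lemma kurSet_of_bound {S : Set (WeakDual ℝ X)} {M ε : ℝ} (hM : 0 ≤ M)
    (hbd : ∀ y ∈ S, dnorm y ≤ M) (hε : 2 * M < ε) : ε ∈ kurSet S := by
  refine ⟨by linarith, {0}, fun y hy => ?_⟩
  simp only [Finset.mem_singleton, iUnion_iUnion_eq_left, mem_setOf_eq, sub_zero]
  exact le_trans (hbd y hy) (by linarith)

lemma kurSet_nonempty [CompleteSpace X] {S : Set (WeakDual ℝ X)} (hS : IsCompact S) :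
    (kurSet S).Nonempty := by
  obtain ⟨M, hM, hbd⟩ := exists_dnorm_bound hS
  exact ⟨2 * M + 1, kurSet_of_bound hM.le hbd (by linarith)⟩

lemma nicePkg_kur [CompleteSpace X] : NicePkg (kur (X := X)) := by
  classical
  constructor
  · exact fun S => Real.sInf_nonneg fun ε hε => hε.1.le
  · intro S M hM hbd
    refine le_of_forall_pos_le_add fun δ hδ => ?_
    exact kur_le (kurSet_of_bound hM hbd (by linarith))
  · intro S T hST hT
    refine csInf_le_csInf ⟨0, fun y hy => hy.1.le⟩ (kurSet_nonempty hT) ?_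
    rintro ε ⟨h0, F, hF⟩
    exact ⟨h0, F, hST.trans hF⟩
  · intro S p D c hc hcomp hlt hsub
    rcases Nat.eq_zero_or_pos p with rfl | hp
    · have hSempty : S = ∅ := subset_empty_iff.1 (by simpa using hsub)
      subst hSempty
      refine lt_of_le_of_lt (kur_le (ε := c/2) ⟨half_pos hc, ∅, by simp⟩) (half_lt_self hc)
    · have hDi : ∀ i, i < p → ∃ ε ∈ kurSet (D i), ε < c := fun i hi =>
        exists_lt_of_csInf_lt (kurSet_nonempty (hcomp i hi)) (hlt i hi)
      choose! f hfK hfc using hDi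
      have hne : (Finset.range p).Nonempty := Finset.nonempty_range_iff.2 hp.ne'
      set ε' := (Finset.range p).sup' hne f with hε'def
      have hle : ∀ i, i < p → f i ≤ ε' := fun i hi => Finset.le_sup' f (Finset.mem_range.2 hi)
      have hε'0 : 0 < ε' := lt_of_lt_of_le (hfK 0 hp).1 (hle 0 hp)
      have hε'c : ε' < c := (Finset.sup'_lt_iff hne).2 fun i hi => hfc i (Finset.mem_range.1 hi)
      have hKi : ∀ i, i < p → ∃ F : Finset (WeakDual ℝ X),
          D i ⊆ ⋃ c' ∈ F, {y | dnorm (y - c') ≤ ε' / 2} := fun i hi =>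
        (kurSet_mono_eps (hfK i hi) (hle i hi)).2
      choose! Fi hFi using hKi
      refine lt_of_le_of_lt (kur_le ⟨hε'0, (Finset.range p).biUnion Fi, ?_⟩) hε'c
      intro x hx
      obtain ⟨i, hi, hxD⟩ := by simpa only [mem_iUnion, exists_prop] using hsub hx
      rw [Finset.mem_range] at hi
      obtain ⟨c', hc', hxc⟩ := by
        simpa only [mem_iUnion, exists_prop] using hFi i hi hxD
      simp only [mem_iUnion, exists_prop]
      exact ⟨c', Finset.mem_biUnion.2 ⟨i, Finset.mem_range.2 hi, hc'⟩, hxc⟩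
  · intro ν hν S
    have habs : (0:ℝ) < |ν| := abs_pos.2 hν
    have hset : kurSet (ν • S) = |ν| • kurSet S := by
      ext ε
      simp only [kurSet, mem_setOf_eq, Set.mem_smul_set, smul_eq_mul]
      constructor
      · rintro ⟨h0, F, hF⟩
        refine ⟨ε / |ν|, ⟨div_pos h0 habs, F.image (fun c => ν⁻¹ • c), ?_⟩, by field_simp⟩
        intro z hz
        have hνz := hF (Set.smul_mem_smul_set hz)
        obtain ⟨c, hcF, hc⟩ := by simpa only [mem_iUnion, exists_prop] using hνz
        simp only [mem_iUnion, exists_prop]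
        refine ⟨ν⁻¹ • c, Finset.mem_image_of_mem _ hcF, ?_⟩
        have h1 : ν • (z - ν⁻¹ • c) = ν • z - c := by
          rw [smul_sub, smul_inv_smul₀ hν]
        have h2 : dnorm (ν • (z - ν⁻¹ • c)) = |ν| * dnorm (z - ν⁻¹ • c) := dnorm_smul ν _
        rw [h1] at h2
        have h3 : dnorm (z - ν⁻¹ • c) = |ν|⁻¹ * dnorm (ν • z - c) := by
          field_simp at h2 ⊢
          linarith [h2]
        rw [mem_setOf_eq, h3, show ε / |ν| / 2 = |ν|⁻¹ * (ε / 2) from by field_simp]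
        exact mul_le_mul_of_nonneg_left hc (by positivity)
      · rintro ⟨δ, ⟨hδ0, F, hF⟩, rfl⟩
        refine ⟨by positivity, F.image (fun c => ν • c), ?_⟩
        rintro _ ⟨z, hz, rfl⟩
        obtain ⟨c, hcF, hc⟩ := by simpa only [mem_iUnion, exists_prop] using hF hz
        simp only [mem_iUnion, exists_prop]
        refine ⟨ν • c, Finset.mem_image_of_mem _ hcF, ?_⟩
        have h1 : ν • z - ν • c = ν • (z - c) := (smul_sub ν z c).symm
        rw [mem_setOf_eq, h1, dnorm_smul]
        rw [show |ν| * δ / 2 = |ν| * (δ / 2) from by ring]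
        exact mul_le_mul_of_nonneg_left hc (abs_nonneg ν)
    rw [kur_eq_sInf, kur_eq_sInf, hset, Real.sInf_smul_of_nonneg (abs_nonneg ν)]
    rfl
  · intro S hS r hr
    have key : ∀ ε ∈ kurSet S, ε + 2 * r ∈ kurSet (S + r • dualBall X) := by
      rintro ε ⟨h0, F, hF⟩
      refine ⟨by linarith, F, ?_⟩
      rintro y ⟨s, hs, w, hw, rfl⟩
      obtain ⟨c, hcF, hc⟩ := by simpa only [mem_iUnion, exists_prop] using hF hs
      simp only [mem_iUnion, exists_prop]
      refine ⟨c, hcF, ?_⟩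
      have hwn : dnorm w ≤ r := (mem_smul_dualBall hr).1 hw
      have h1 : s + w - c = (s - c) + w := by abel
      rw [mem_setOf_eq, h1]
      calc dnorm ((s - c) + w) ≤ dnorm (s - c) + dnorm w := dnorm_add_le _ _
        _ ≤ ε / 2 + r := add_le_add hc hwn
        _ = (ε + 2 * r) / 2 := by ring
    obtain ⟨ε0, hε0⟩ := kurSet_nonempty hS
    have h2 : kur (S + r • dualBall X) - 2 * r ≤ kur S := by
      rw [kur_eq_sInf S]
      refine le_csInf ⟨ε0, hε0⟩ ?_
      intro ε hε
      have := kur_le (key ε hε)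
      linarith
    linarith

lemma nicePkg_omegaPow [CompleteSpace X] (n : ℕ) : NicePkg (omegaPow (kur (X := X)) n) := by
  induction n with
  | zero => exact nicePkg_kur
  | succ n ih => exact ih.etaOmegaPkg

end KurPkg


end WeakDualAux

end Aux

set_option maxHeartbeats 2000000

/-- If `X` is separable and `A ⊆ X*` is weak*-compact with
`[σ^{ω^n}]^m_ε(A) = ∅` (`n ≥ 0`, `m ≥ 1`), then there is a symmetric radial
weak*-compact `B ⊇ A` with `[σ^{ω^n}]'_{4ε}(B) ⊆ (1 - 1/(32(m+1))) B`. -/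
theorem exists_radial_superset
    {X : Type*} [NormedAddCommGroup X] [NormedSpace ℝ X] [CompleteSpace X]
    [TopologicalSpace.SeparableSpace X]
    (A : Set (WeakDual ℝ X)) (hA : IsCompact A)
    (n m : ℕ) (hm : 1 ≤ m) (ε : ℝ) (hε : 0 < ε)
    (h : fragIter (omegaPow (kur (X := X)) n) ε A (m : Ordinal.{0}) = ∅) :
    ∃ B : Set (WeakDual ℝ X), IsCompact B ∧ A ⊆ B ∧
      (∀ x ∈ B, -x ∈ B) ∧
      (∀ x ∈ B, ∀ l : ℝ, 0 ≤ l → l ≤ 1 → l • x ∈ B) ∧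
      frag (omegaPow (kur (X := X)) n) (4 * ε) B ⊆
        (1 - 1 / (32 * ((m : ℝ) + 1))) • B := by
  classical
  set η := omegaPow (kur (X := X)) n with hηdef
  have pkg : NicePkg η := nicePkg_omegaPow n
  obtain ⟨M₀, hM₀, hM₀bd⟩ := exists_dnorm_bound hA
  set c : ℝ := 1 / (32 * ((m : ℝ) + 1)) with hcdef
  have hm1 : (1:ℝ) ≤ (m : ℝ) := by exact_mod_cast hm
  have hc0 : 0 < c := by positivity
  have hc1 : c ≤ 1/64 := by
    rw [hcdef, div_le_div_iff₀ (by positivity) (by norm_num)]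
    nlinarith
  have h1c : 0 < 1 - c := by linarith
  set t : ℕ → ℝ := fun j => ((1 - c)⁻¹) ^ j with htdef
  have ht0 : t 0 = 1 := pow_zero _
  have htpos : ∀ j, 0 < t j := fun j => pow_pos (by positivity) j
  have htsucc : ∀ j, t (j + 1) = (1 - c)⁻¹ * t j := by
    intro j
    show (1 - c)⁻¹ ^ (j + 1) = (1 - c)⁻¹ * (1 - c)⁻¹ ^ j
    rw [pow_succ]
    ring
  have htle2 : ∀ j, j < m → t j ≤ 2 := by
    intro j hj
    have hb : (1:ℝ) - j * c ≤ (1 - c) ^ j := by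
      have h1 := one_add_mul_le_pow (a := -c) (by linarith : (-2:ℝ) ≤ -c) j
      calc (1:ℝ) - j * c = 1 + j * (-c) := by ring
        _ ≤ (1 + -c) ^ j := h1
        _ = (1 - c) ^ j := by ring_nf
    have hjm : (j:ℝ) ≤ m := by exact_mod_cast hj.le
    have hjc : (j:ℝ) * c ≤ 1/2 := by
      have h2 : (j:ℝ) * c ≤ (m:ℝ) * c := by nlinarith
      have h3 : (m:ℝ) * c ≤ 1/2 := by
        rw [hcdef, mul_one_div, div_le_iff₀ (by positivity)]
        nlinarith
      linarith
    have h12 : (1:ℝ)/2 ≤ (1-c)^j := by linarith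
    have hpow : (0:ℝ) < (1-c)^j := pow_pos h1c j
    show (1 - c)⁻¹ ^ j ≤ 2
    rw [inv_pow]
    have h13 : ((1-c)^j)⁻¹ ≤ ((1:ℝ)/2)⁻¹ := inv_anti₀ (by norm_num) h12
    simpa using h13
  set Aj : ℕ → Set (WeakDual ℝ X) := fun j => fragN η ε j A with hAjdef
  have hAjc : ∀ j, IsCompact (Aj j) := fun j => isCompact_fragN η ε hA j
  have hAjA : ∀ j, Aj j ⊆ A := fun j => fragN_subset η ε A j
  have hAm : Aj m = ∅ := by
    show fragN η ε m A = ∅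
    rw [← fragIter_natCast]
    exact h
  set Φ : ℝ × WeakDual ℝ X → WeakDual ℝ X := fun p => p.1 • p.2 with hΦdef
  have hΦc : Continuous Φ := continuous_smul
  set L : ℕ → Set (WeakDual ℝ X) := fun j => Φ '' (Icc (-(t j)) (t j) ×ˢ Aj j) with hLdef
  have hLc : ∀ j, IsCompact (L j) := fun j => ((isCompact_Icc).prod (hAjc j)).image hΦc
  set B : Set (WeakDual ℝ X) := ⋃ j ∈ Finset.range m, L j with hBdef
  have hBc : IsCompact B := (Finset.range m).finite_toSet.isCompact_biUnion fun j _ => hLc j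
  have hmem_L : ∀ (j : ℕ) (ν : ℝ) (b : WeakDual ℝ X), |ν| ≤ t j → b ∈ Aj j →
      ν • b ∈ L j := by
    intro j ν b hν hb
    exact ⟨(ν, b), ⟨mem_Icc.2 (abs_le.1 hν), hb⟩, rfl⟩
  have hmemB : ∀ (j : ℕ), j < m → ∀ y ∈ L j, y ∈ B :=
    fun j hj y hy => mem_biUnion (Finset.mem_range.2 hj) hy
  have hBstruct : ∀ y ∈ B, ∃ j, j < m ∧ ∃ p : ℝ × WeakDual ℝ X,
      p.1 ∈ Icc (-(t j)) (t j) ∧ p.2 ∈ Aj j ∧ Φ p = y := by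
    intro y hy
    rw [hBdef] at hy
    obtain ⟨j, hj, hyL⟩ := by simpa only [mem_iUnion, exists_prop] using hy
    obtain ⟨p, ⟨hp1, hp2⟩, hpy⟩ := hyL
    exact ⟨j, Finset.mem_range.1 hj, p, hp1, hp2, hpy⟩
  have hAB : A ⊆ B := by
    intro a ha
    refine hmemB 0 hm _ ?_
    have h1 : (1:ℝ) • a ∈ L 0 := hmem_L 0 1 a (by rw [ht0]; simp) ha
    rwa [one_smul] at h1
  have hsym : ∀ x ∈ B, -x ∈ B := by
    intro x hxB
    obtain ⟨j, hj, p, hp1, hp2, hpx⟩ := hBstruct x hxB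
    refine hmemB j hj _ ?_
    have h1 : (-p.1) • p.2 ∈ L j := by
      refine hmem_L j _ _ ?_ hp2
      rw [abs_neg]
      exact abs_le.2 (mem_Icc.1 hp1)
    rwa [neg_smul, show p.1 • p.2 = x from hpx] at h1
  have hrad : ∀ x ∈ B, ∀ l : ℝ, 0 ≤ l → l ≤ 1 → l • x ∈ B := by
    intro x hxB l hl0 hl1
    obtain ⟨j, hj, p, hp1, hp2, hpx⟩ := hBstruct x hxB
    refine hmemB j hj _ ?_
    have h1 : (l * p.1) • p.2 ∈ L j := by
      refine hmem_L j _ _ ?_ hp2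
      rw [abs_mul]
      calc |l| * |p.1| ≤ 1 * |p.1| := by
            refine mul_le_mul_of_nonneg_right ?_ (abs_nonneg _)
            rw [abs_of_nonneg hl0]; exact hl1
        _ = |p.1| := one_mul _
        _ ≤ t j := abs_le.2 (mem_Icc.1 hp1)
    rwa [mul_smul, show p.1 • p.2 = x from hpx] at h1
  refine ⟨B, hBc, hAB, hsym, hrad, ?_⟩
  intro x hx
  by_contra hxn
  have hxB : x ∈ B := hx.1
  obtain ⟨j₀, hj₀, p₀, hp₀1, hp₀2, hp₀x⟩ := hBstruct x hxB
  have hx0 : x ≠ 0 := by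
    rintro rfl
    refine hxn ?_
    have h0B : (0 : WeakDual ℝ X) ∈ B := by
      refine hmemB j₀ hj₀ _ ?_
      have h1 : (0:ℝ) • p₀.2 ∈ L j₀ := hmem_L j₀ 0 p₀.2 (by simpa using (htpos j₀).le) hp₀2
      rwa [zero_smul] at h1
    exact ⟨0, h0B, smul_zero _⟩
  set ρ := dnorm x with hρdef
  have hρ : 0 < ρ := dnorm_pos hx0
  have hbound : ∀ (j : ℕ) (b : WeakDual ℝ X), b ∈ Aj j → dnorm b ≤ M₀ :=
    fun j b hb => hM₀bd b (hAjA j hb)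
  have hrep : ∀ (j : ℕ), j < m → ∀ ν : ℝ, ν ≠ 0 → |ν| ≤ t j → ν⁻¹ • x ∈ Aj j →
      ν⁻¹ • x ∉ Aj (j + 1) := by
    intro j hj ν hν hνt hb hbn
    rcases Nat.lt_or_ge (j+1) m with hjm | hjm
    · refine hxn ?_
      have hmem : ((1 - c)⁻¹ * ν) • (ν⁻¹ • x) ∈ L (j + 1) := by
        refine hmem_L _ _ _ ?_ hbn
        rw [abs_mul, abs_inv, abs_of_pos h1c, htsucc j]
        exact mul_le_mul_of_nonneg_left hνt (by positivity)
      refine ⟨((1 - c)⁻¹ * ν) • (ν⁻¹ • x), hmemB _ hjm _ hmem, ?_⟩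
      have hcalc : (1 - c) * ((1 - c)⁻¹ * ν) = ν := by field_simp
      calc (1 - c) • (((1 - c)⁻¹ * ν) • (ν⁻¹ • x))
          = ((1 - c) * ((1 - c)⁻¹ * ν)) • (ν⁻¹ • x) := smul_smul _ _ _
        _ = ν • ν⁻¹ • x := by rw [hcalc]
        _ = x := smul_inv_smul₀ hν x
    · have h1 : Aj (j + 1) ⊆ Aj m := fragN_anti η ε A hjm
      rw [hAm] at h1
      exact h1 hbn
  set δ : ℝ := ε / (2 * M₀) with hδdef
  have hδ0 : 0 < δ := by positivity
  have hδM : 2 * (δ * M₀) = ε := by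
    rw [hδdef]
    field_simp
  have hUj : ∀ (j : ℕ), j < m → ∃ U, IsOpen U ∧ x ∈ U ∧ η (L j ∩ closure U) < 4 * ε := by
    intro j hj
    set Cset : Set ℝ := {ν : ℝ | ρ / M₀ ≤ |ν| ∧ |ν| ≤ t j} with hCdef
    have hCclosed : IsClosed Cset := (isClosed_le continuous_const continuous_abs).inter
      (isClosed_le continuous_abs continuous_const)
    have hCsub : Cset ⊆ Icc (-(t j)) (t j) := fun ν hν => mem_Icc.2 (abs_le.1 hν.2)
    have hCcomp : IsCompact Cset := isCompact_Icc.of_isClosed_subset hCclosed hCsub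
    set G : Set (ℝ × WeakDual ℝ X) := (Cset ×ˢ Aj j) ∩ Φ ⁻¹' {x} with hGdef
    have hG : IsCompact G :=
      (hCcomp.prod (hAjc j)).inter_right (isClosed_singleton.preimage hΦc)
    have hGfact : ∀ p ∈ G, p.1 ≠ 0 ∧ p.2 ∈ Aj j ∧ p.2 ∉ frag η ε (Aj j) ∧ |p.1| ≤ t j := by
      rintro p ⟨⟨hp1, hp2⟩, hp3⟩
      have hp1ne : p.1 ≠ 0 := by
        intro h0
        have h1 := hp1.1
        rw [h0, abs_zero] at h1
        have h2 : 0 < ρ / M₀ := by positivity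
        linarith
      have hpx : Φ p = x := by simpa using hp3
      have hbv : p.2 = p.1⁻¹ • x := by
        rw [← hpx, hΦdef]
        simp only
        rw [smul_smul, inv_mul_cancel₀ hp1ne, one_smul]
      have hfr : p.2 ∉ Aj (j+1) := by
        rw [hbv]
        exact hrep j hj p.1 hp1ne hp1.2 (hbv ▸ hp2)
      refine ⟨hp1ne, hp2, ?_, hp1.2⟩
      exact fun hcon => hfr (show p.2 ∈ Aj (j+1) from hcon)
    have hesc : ∀ p ∈ G, ∃ V, IsOpen V ∧ p.2 ∈ V ∧ η (Aj j ∩ closure V) < ε := by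
      intro p hp
      obtain ⟨_, hb, hfr, _⟩ := hGfact p hp
      exact pkg.exists_open_escape (hAjc j) hb hfr
    choose! V hVo hVmem hVlt using hesc
    have hGcov : G ⊆ ⋃ q : G, (Metric.ball q.1.1 δ ×ˢ V q.1) := by
      intro p hp
      exact mem_iUnion.2 ⟨⟨p, hp⟩, ⟨Metric.mem_ball_self hδ0, hVmem p hp⟩⟩
    obtain ⟨tG, htG⟩ := hG.elim_finite_subcover (fun q : G => Metric.ball q.1.1 δ ×ˢ V q.1)
      (fun q => Metric.isOpen_ball.prod (hVo q.1 q.2)) hGcov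
    set K : Set (ℝ × WeakDual ℝ X) := Icc (-(t j)) (t j) ×ˢ Aj j with hKdef
    have hK : IsCompact K := isCompact_Icc.prod (hAjc j)
    set O : Set (ℝ × WeakDual ℝ X) := ⋃ q ∈ tG, (Metric.ball q.1.1 δ ×ˢ V q.1) with hOdef
    have hOo : IsOpen O := isOpen_biUnion fun q _ => Metric.isOpen_ball.prod (hVo q.1 q.2)
    have hK' : IsCompact (K ∩ Oᶜ) := hK.inter_right hOo.isClosed_compl
    have hxK' : x ∉ Φ '' (K ∩ Oᶜ) := by
      rintro ⟨p, ⟨hpK, hpO⟩, hpx⟩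
      have hpG : p ∈ G := by
        refine ⟨⟨⟨?_, abs_le.2 (mem_Icc.1 hpK.1)⟩, hpK.2⟩, by simpa using hpx⟩
        have hb2 : dnorm p.2 ≤ M₀ := hbound j p.2 hpK.2
        have hρeq : ρ = |p.1| * dnorm p.2 := by
          rw [hρdef, ← hpx]
          exact dnorm_smul _ _
        rw [div_le_iff₀ hM₀]
        calc ρ = |p.1| * dnorm p.2 := hρeq
          _ ≤ |p.1| * M₀ := mul_le_mul_of_nonneg_left hb2 (abs_nonneg _)
      have hint : p ∈ O := htG hpG
      exact hpO hint
    obtain ⟨U, hUo, hxU, hUdisj⟩ := sep_compact (hK'.image hΦc) hxK'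
    refine ⟨U, hUo, hxU, ?_⟩
    refine pkg.cover_finset _ tG
      (fun q : G => (q.1.1 • (Aj j ∩ closure (V q.1))) + (δ * M₀) • dualBall X) (4*ε)
      (by linarith) ?_ ?_ ?_
    · intro q _
      exact (((hAjc j).inter_right isClosed_closure).smul _).add (isCompact_dualBall.smul _)
    · intro q hq
      obtain ⟨hq1, hq2, hq3, hq4⟩ := hGfact q.1 q.2
      have h1 : η ((q.1.1 • (Aj j ∩ closure (V q.1))) + (δ * M₀) • dualBall X)
          ≤ η (q.1.1 • (Aj j ∩ closure (V q.1))) + 2 * (δ * M₀) :=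
        pkg.thicken _ (((hAjc j).inter_right isClosed_closure).smul _) _ (by positivity)
      have h2 : η (q.1.1 • (Aj j ∩ closure (V q.1))) = |q.1.1| * η (Aj j ∩ closure (V q.1)) :=
        pkg.scale _ hq1 _
      have h3 : η (Aj j ∩ closure (V q.1)) < ε := hVlt q.1 q.2
      have h4 : |q.1.1| ≤ 2 := le_trans hq4 (htle2 j hj)
      have h5 : 0 ≤ η (Aj j ∩ closure (V q.1)) := pkg.nonneg _
      have h6 : |q.1.1| * η (Aj j ∩ closure (V q.1)) ≤ 2 * η (Aj j ∩ closure (V q.1)) :=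
        mul_le_mul_of_nonneg_right h4 h5
      nlinarith
    · rintro y ⟨hyL, hycl⟩
      obtain ⟨p, hpK, rfl⟩ := hyL
      by_cases hpO : p ∈ O
      · obtain ⟨q, hqtG, hpq⟩ := by simpa only [hOdef, mem_iUnion, exists_prop] using hpO
        obtain ⟨hp1m, hp2m⟩ := hpq
        simp only [mem_iUnion, exists_prop]
        refine ⟨q, hqtG, ?_⟩
        have hsplit : Φ p = q.1.1 • p.2 + (p.1 - q.1.1) • p.2 := by
          rw [hΦdef]
          simp only
          rw [← add_smul]
          congr 1
          ring
        rw [hsplit]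
        refine Set.add_mem_add (Set.smul_mem_smul_set ⟨hpK.2, subset_closure hp2m⟩) ?_
        rw [mem_smul_dualBall (by positivity), dnorm_smul]
        have hd : |p.1 - q.1.1| ≤ δ := by
          have h7 := hp1m
          rw [Metric.mem_ball, Real.dist_eq] at h7
          exact h7.le
        have hb2 : dnorm p.2 ≤ M₀ := hbound j p.2 hpK.2
        exact mul_le_mul hd hb2 (dnorm_nonneg _) hδ0.le
      · exfalso
        rw [eq_empty_iff_forall_notMem] at hUdisj
        exact hUdisj (Φ p) ⟨hycl, ⟨p, ⟨hpK, hpO⟩, rfl⟩⟩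
  choose! U hUo hUx hUlt using hUj
  set Uf : Set (WeakDual ℝ X) := ⋂ j ∈ Finset.range m, U j with hUfdef
  have hUfo : IsOpen Uf := isOpen_biInter_finset fun j hj => hUo j (Finset.mem_range.1 hj)
  have hUfx : x ∈ Uf := mem_biInter fun j hj => hUx j (Finset.mem_range.1 hj)
  have hfinal : η (B ∩ closure Uf) < 4 * ε := by
    refine pkg.cover_finset _ (Finset.range m) (fun j => L j ∩ closure (U j)) (4*ε)
      (by linarith) ?_ ?_ ?_
    · intro j _
      exact (hLc j).inter_right isClosed_closure
    · intro j hj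
      exact hUlt j (Finset.mem_range.1 hj)
    · rintro y ⟨hyB, hycl⟩
      have hyB' := hyB
      rw [hBdef] at hyB'
      obtain ⟨j, hj, hyL⟩ := by simpa only [mem_iUnion, exists_prop] using hyB'
      simp only [mem_iUnion, exists_prop]
      refine ⟨j, hj, hyL, ?_⟩
      refine closure_mono ?_ hycl
      rw [hUfdef]
      exact biInter_subset_of_mem hj
  exact absurd (hx.2 Uf (hUfo.mem_nhds hUfx)) (not_le.2 hfinal)


end Szlenk
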